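/- Let n be odd, n ≥ 3. The formal power series t^{n-1}·(1/(1-t²) + t^{n-1}/(1-t^{n-1})) has q-th coefficient equal to: 2 if q = k(n-1) for some integer k ≥ 2; 1 if q = (n-1)+2k for some k ∈ ℕ₀ and q ≠ k(n-1) for all integers k ≥ 2; and 0 otherwise. -/

import Mathlib

open scoped Classical

open PowerSeries in
lemma inv_one_sub_pow_eq (m : ℕ) (hm : 0 < m) :
    (1 - X ^ m : ℚ⟦X⟧)⁻¹ = PowerSeries.mk (fun q => if m ∣ q then 1 else 0) := by
  rw [PowerSeries.inv_eq_iff_mul_eq_one]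
  · ext q
    rw [mul_sub, mul_one, map_sub, PowerSeries.coeff_mul_X_pow']
    simp only [PowerSeries.coeff_mk, PowerSeries.coeff_one]
    rcases eq_or_ne q 0 with rfl | hq
    · simp [Nat.le_zero, hm.ne']
    · simp only [hq, if_false]
      by_cases hle : m ≤ q
      · simp only [hle, if_true]
        by_cases hd : m ∣ q
        · have : m ∣ q - m := (Nat.dvd_sub hd dvd_rfl)
          simp [hd, this]
        · have : ¬ m ∣ q - m := by
            intro h
            exact hd (by have := Nat.dvd_add h (dvd_refl m); rwa [Nat.sub_add_cancel hle] at this)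
          simp [hd, this]
      · simp only [hle, if_false, sub_zero]
        have hd : ¬ m ∣ q := fun h => hle (Nat.le_of_dvd (Nat.pos_of_ne_zero hq) h)
        simp [hd]
  · simp [PowerSeries.constantCoeff_one, hm.ne']

theorem stmt_4 (n : ℕ) (hn : Odd n) (hn3 : 3 ≤ n) (q : ℕ) :
    (PowerSeries.coeff (R := ℚ) q)
      (PowerSeries.X ^ (n - 1) *
        ((1 - PowerSeries.X ^ 2)⁻¹ +
          PowerSeries.X ^ (n - 1) * (1 - PowerSeries.X ^ (n - 1))⁻¹)) =
    if ∃ k : ℕ, 2 ≤ k ∧ q = k * (n - 1) then 2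
    else if ∃ k : ℕ, q = (n - 1) + 2 * k then 1
    else 0 := by
  have hm : 0 < n - 1 := by omega
  have heven : 2 ∣ (n - 1) := by
    obtain ⟨j, rfl⟩ := hn; omega
  obtain ⟨j, hj⟩ := heven
  rw [inv_one_sub_pow_eq 2 (by norm_num), inv_one_sub_pow_eq (n-1) hm,
    PowerSeries.coeff_X_pow_mul']
  by_cases h1 : n - 1 ≤ q
  · rw [if_pos h1, map_add, PowerSeries.coeff_X_pow_mul', PowerSeries.coeff_mk]
    by_cases h2 : n - 1 ≤ q - (n - 1)
    · rw [if_pos h2, PowerSeries.coeff_mk]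
      by_cases hd : (n - 1) ∣ q - (n - 1) - (n - 1)
      · rw [if_pos hd]
        obtain ⟨k, hk⟩ := hd
        have hr : (k + 2) * (n - 1) = (n - 1) * k + 2 * (n - 1) := by ring
        have hq : q = (k + 2) * (n - 1) := by omega
        have h2d : 2 ∣ q - (n - 1) := ⟨(k + 1) * j, by
          have : (n - 1) * k + (n - 1) = 2 * ((k + 1) * j) := by rw [hj]; ring
          omega⟩
        rw [if_pos h2d, if_pos ⟨k + 2, by omega, hq⟩]
        norm_num
      · rw [if_neg hd]
        have hnk : ¬ ∃ k : ℕ, 2 ≤ k ∧ q = k * (n - 1) := by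
          rintro ⟨k, hk2, rfl⟩
          refine hd ⟨k - 2, ?_⟩
          have hr : (k - 2) * (n - 1) + 2 * (n - 1) = k * (n - 1) := by
            rw [← Nat.add_mul]; congr 1; omega
          have hc : (n - 1) * (k - 2) = (k - 2) * (n - 1) := Nat.mul_comm _ _
          omega
        rw [if_neg hnk, add_zero]
        by_cases h2d : 2 ∣ q - (n - 1)
        · obtain ⟨i, hi⟩ := h2d
          rw [if_pos (show (2:ℕ) ∣ q - (n - 1) from ⟨i, hi⟩), if_pos (show ∃ k, q = n - 1 + 2 * k from ⟨i, by omega⟩)]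
        · rw [if_neg h2d, if_neg]
          rintro ⟨k, hk⟩
          exact h2d ⟨k, by omega⟩
    · rw [if_neg h2, add_zero]
      have hnk : ¬ ∃ k : ℕ, 2 ≤ k ∧ q = k * (n - 1) := by
        rintro ⟨k, hk2, rfl⟩
        have : 2 * (n - 1) ≤ k * (n - 1) := Nat.mul_le_mul_right _ hk2
        omega
      rw [if_neg hnk]
      by_cases h2d : 2 ∣ q - (n - 1)
      · obtain ⟨i, hi⟩ := h2d
        rw [if_pos (show (2:ℕ) ∣ q - (n - 1) from ⟨i, hi⟩), if_pos (show ∃ k, q = n - 1 + 2 * k from ⟨i, by omega⟩)]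
      · rw [if_neg h2d, if_neg]
        rintro ⟨k, hk⟩
        exact h2d ⟨k, by omega⟩
  · rw [if_neg h1, if_neg, if_neg]
    · rintro ⟨k, hk⟩; omega
    · rintro ⟨k, hk2, rfl⟩
      have : 2 * (n - 1) ≤ k * (n - 1) := Nat.mul_le_mul_right _ hk2
      omega
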